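/- Let (T,→) be a tournament whose automorphism group is transitive on vertices and transitive on arcs (i.e. ≤2-homogeneous), and suppose that for each vertex x the 3-cycle C_3 embeds into the out-neighbourhood x⁺ = {y : x → y}. Then C_3 also embeds into each in-neighbourhood x⁻ = {y : y → x}. -/

import Mathlib

/-- In a vertex- and arc-transitive tournament in which every
out-neighbourhood contains a 3-cycle, every in-neighbourhood contains a
3-cycle. -/
theorem stmt1 {T : Type*} (r : T → T → Prop)
    (hirr : ∀ x, ¬ r x x)
    (htour : ∀ x y : T, x ≠ y → (r x y ↔ ¬ r y x))
    (hvtrans : ∀ x y : T, ∃ g : T ≃ T, (∀ u v, r (g u) (g v) ↔ r u v) ∧ g x = y)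
    (harctrans : ∀ x y x' y' : T, r x y → r x' y' →
      ∃ g : T ≃ T, (∀ u v, r (g u) (g v) ↔ r u v) ∧ g x = x' ∧ g y = y')
    (hout : ∀ x : T, ∃ a b c : T, a ≠ b ∧ b ≠ c ∧ a ≠ c ∧
      r x a ∧ r x b ∧ r x c ∧ r a b ∧ r b c ∧ r c a) :
    ∀ x : T, ∃ a b c : T, a ≠ b ∧ b ≠ c ∧ a ≠ c ∧
      r a x ∧ r b x ∧ r c x ∧ r a b ∧ r b c ∧ r c a := by
  intro x
  -- transport a 3-cycle inside some in-neighbourhood z⁻ to x⁻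
  have transport : ∀ z p q s : T, p ≠ q → q ≠ s → p ≠ s →
      r p z → r q z → r s z → r p q → r q s → r s p →
      ∃ a b c : T, a ≠ b ∧ b ≠ c ∧ a ≠ c ∧
        r a x ∧ r b x ∧ r c x ∧ r a b ∧ r b c ∧ r c a := by
    intro z p q s hpq hqs hps hpz hqz hsz rpq rqs rsp
    obtain ⟨g, hg, hgz⟩ := hvtrans z x
    refine ⟨g p, g q, g s, fun h => hpq (g.injective h), fun h => hqs (g.injective h),
      fun h => hps (g.injective h), ?_, ?_, ?_,
      (hg p q).mpr rpq, (hg q s).mpr rqs, (hg s p).mpr rsp⟩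
    · have := (hg p z).mpr hpz; rwa [hgz] at this
    · have := (hg q z).mpr hqz; rwa [hgz] at this
    · have := (hg s z).mpr hsz; rwa [hgz] at this
  obtain ⟨a, b, c, hab, hbc, hac, hxa, hxb, hxc, rab, rbc, rca⟩ := hout x
  -- a 3-cycle through b inside a⁺
  obtain ⟨p, q, s, hpq, hqs, hps, hap, haq, has, rpq, rqs, rsp⟩ := hout a
  obtain ⟨g, hg, hga, hgp⟩ := harctrans a p a b hap rab
  set d := g q with hd
  set e := g s with he
  have rad : r a d := by have := (hg a q).mpr haq; rwa [hga] at this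
  have rae : r a e := by have := (hg a s).mpr has; rwa [hga] at this
  have rbd : r b d := by have := (hg p q).mpr rpq; rwa [hgp] at this
  have rde : r d e := (hg q s).mpr rqs
  have reb : r e b := by have := (hg s p).mpr rsp; rwa [hgp] at this
  have hbd : b ≠ d := fun h => hirr b (h ▸ rbd)
  have hde : d ≠ e := fun h => hirr d (h ▸ rde)
  have hbe : b ≠ e := fun h => hirr e (h ▸ reb)
  have hcd : c ≠ d := fun h => (htour a c hac).mp (by rw [h]; exact rad) rca
  have hce : c ≠ e := fun h => (htour a c hac).mp (by rw [h]; exact rae) rca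
  have had : a ≠ d := fun h => hirr a (h ▸ rad)
  by_cases hdc : r d c
  · by_cases hcee : r c e
    · -- 3-cycle a→d→c→a inside e⁻
      exact transport e a d c had (fun h => hirr d (h ▸ hdc)) hac rae rde hcee rad hdc rca
    · -- then e→c ; 3-cycle b→d→e→b inside c⁻
      have rec' : r e c := (htour e c hce.symm).mpr fun h => hcee h
      exact transport c b d e hbd hde hbe rbc hdc rec' rbd rde reb
  · -- then c→d ; 3-cycle a→b→c→a inside d⁻
    have rcd : r c d := (htour c d hcd).mpr hdc
    exact transport d a b c hab hbc hac rad rbd rcd rab rbc rca
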